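/- For any compact metric spaces X and Y there exists an optimal correspondence, i.e., a correspondence R between X and Y with dis R = 2·d_GH(X,Y). -/

import Mathlib

open GromovHausdorff Metric EMetric Set

/-- The distortion of a relation `R ⊆ X × Y`. -/
noncomputable def relDistortion {X Y : Type*} [MetricSpace X] [MetricSpace Y]
    (R : Set (X × Y)) : ℝ :=
  sSup {v : ℝ | ∃ p ∈ R, ∃ q ∈ R, v = |dist p.1 q.1 - dist p.2 q.2|}

/-- A correspondence between `X` and `Y`: a relation whose projections onto both
factors are surjective. -/
def IsCorrespondence {X Y : Type*} (R : Set (X × Y)) : Prop :=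
  (∀ x : X, ∃ y : Y, (x, y) ∈ R) ∧ (∀ y : Y, ∃ x : X, (x, y) ∈ R)

/-- for compact metric spaces there exists an optimal correspondence,
i.e. a correspondence whose distortion equals 2·d_GH(X,Y). -/
theorem stmt_2 (X Y : Type) [MetricSpace X] [CompactSpace X] [Nonempty X]
    [MetricSpace Y] [CompactSpace Y] [Nonempty Y] :
    ∃ R : Set (X × Y), IsCorrespondence R ∧
      relDistortion R = 2 * GromovHausdorff.ghDist X Y := by
  classical
  set f : X → OptimalGHCoupling X Y := optimalGHInjl X Y with hf
  set g : Y → OptimalGHCoupling X Y := optimalGHInjr X Y with hg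
  have If : Isometry f := isometry_optimalGHInjl X Y
  have Ig : Isometry g := isometry_optimalGHInjr X Y
  set h := ghDist X Y with hh
  have hopt : hausdorffDist (range f) (range g) = h := hausdorffDist_optimal
  have h0 : 0 ≤ h := by rw [← hopt]; exact hausdorffDist_nonneg
  have cf : IsCompact (range f) := isCompact_range If.continuous
  have cg : IsCompact (range g) := isCompact_range Ig.continuous
  have hne : hausdorffEdist (range f) (range g) ≠ ⊤ :=
    hausdorffEdist_ne_top_of_nonempty_of_bounded (range_nonempty f) (range_nonempty g)
      cf.isBounded cg.isBounded
  set R : Set (X × Y) := {p | dist (f p.1) (g p.2) ≤ h} with hR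
  have corr : IsCorrespondence R := by
    constructor
    · intro x
      obtain ⟨z, hz, hzd⟩ := cg.exists_infDist_eq_dist (range_nonempty g) (f x)
      obtain ⟨y, rfl⟩ := hz
      refine ⟨y, ?_⟩
      have : infDist (f x) (range g) ≤ h := by
        rw [← hopt]; exact infDist_le_hausdorffDist_of_mem (mem_range_self x) hne
      simpa [hR, ← hzd] using this
    · intro y
      obtain ⟨z, hz, hzd⟩ := cf.exists_infDist_eq_dist (range_nonempty f) (g y)
      obtain ⟨x, rfl⟩ := hz
      refine ⟨x, ?_⟩
      have : infDist (g y) (range f) ≤ h := by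
        rw [hausdorffDist_comm] at hopt
        rw [← hopt]; exact infDist_le_hausdorffDist_of_mem (mem_range_self y) (by rw [hausdorffEdist_comm]; exact hne)
      have := hzd ▸ this
      simpa [hR, dist_comm] using this
  set S : Set ℝ := {v : ℝ | ∃ p ∈ R, ∃ q ∈ R, v = |dist p.1 q.1 - dist p.2 q.2|} with hS
  have key : ∀ v ∈ S, v ≤ 2 * h := by
    rintro v ⟨p, hp, q, hq, rfl⟩
    have e1 : dist p.1 q.1 = dist (f p.1) (f q.1) := (If.dist_eq _ _).symm
    have e2 : dist p.2 q.2 = dist (g p.2) (g q.2) := (Ig.dist_eq _ _).symm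
    rw [e1, e2]
    have := dist_dist_dist_le (f p.1) (f q.1) (g p.2) (g q.2)
    rw [Real.dist_eq] at this
    have hp' : dist (f p.1) (g p.2) ≤ h := hp
    have hq' : dist (f q.1) (g q.2) ≤ h := hq
    linarith
  obtain ⟨y₀, hy₀⟩ := corr.1 (Classical.arbitrary X)
  have hSne : (0 : ℝ) ∈ S := ⟨_, hy₀, _, hy₀, by simp⟩
  have hbdd : BddAbove S := ⟨2 * h, key⟩
  have hD0 : (0 : ℝ) ≤ sSup S := le_csSup hbdd hSne
  set D := sSup S with hD
  have hup : relDistortion R ≤ 2 * h := Real.sSup_le key (by linarith)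
  have hlow : h ≤ D / 2 := by
    refine le_of_forall_pos_le_add fun δ δ0 => ?_
    have Hd : ∀ p q : R, |dist (p : X × Y).1 (q : X × Y).1 -
        dist (p : X × Y).2 (q : X × Y).2| ≤ 2 * (D / 2 + δ) := by
      intro p q
      have : |dist (p : X × Y).1 (q : X × Y).1 - dist (p : X × Y).2 (q : X × Y).2| ≤ D :=
        le_csSup hbdd ⟨_, p.2, _, q.2, rfl⟩
      linarith
    haveI : Nonempty R := ⟨⟨_, hy₀⟩⟩
    letI M : MetricSpace (X ⊕ Y) :=
      glueMetricApprox (fun p : R => (p : X × Y).1) (fun p : R => (p : X × Y).2)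
        (D / 2 + δ) (by linarith) Hd
    let Fl := @Sum.inl X Y
    let Fr := @Sum.inr X Y
    have Il : Isometry Fl := Isometry.of_dist_eq fun x y => rfl
    have Ir : Isometry Fr := Isometry.of_dist_eq fun x y => rfl
    have main : ghDist X Y ≤ hausdorffDist (range Fl) (range Fr) :=
      ghDist_le_hausdorffDist Il Ir
    have hHD : hausdorffDist (range Fl) (range Fr) ≤ D / 2 + δ := by
      refine hausdorffDist_le_of_mem_dist (by linarith) ?_ ?_
      · rintro _ ⟨x, rfl⟩
        obtain ⟨y, hy⟩ := corr.1 x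
        exact ⟨Fr y, mem_range_self _,
          le_of_eq (glueDist_glued_points (fun p : R => (p : X × Y).1)
            (fun p : R => (p : X × Y).2) (D / 2 + δ) ⟨(x, y), hy⟩)⟩
      · rintro _ ⟨y, rfl⟩
        obtain ⟨x, hx⟩ := corr.2 y
        refine ⟨Fl x, mem_range_self _, ?_⟩
        rw [dist_comm]
        exact le_of_eq (glueDist_glued_points (fun p : R => (p : X × Y).1)
          (fun p : R => (p : X × Y).2) (D / 2 + δ) ⟨(x, y), hx⟩)
    calc h ≤ hausdorffDist (range Fl) (range Fr) := main
    _ ≤ D / 2 + δ := hHD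
  have : relDistortion R = D := rfl
  exact ⟨R, corr, by rw [this]; linarith⟩
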